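/- Let Γ ≤ Aut(X*) be a weakly branch group generated by finitely many finite-state automorphisms. Then every finite-index subgroup N of Γ contains rist_Γ(n)' for some n. -/

import Mathlib

open List

/-- Vertices of the regular rooted tree over alphabet `X`: finite words. -/
abbrev Vtx (X : Type*) := List X

section Tree

variable {X : Type*} [DecidableEq X]

/-- A permutation of the vertex set is a rooted-tree automorphism if it fixes the
root and maps children of a vertex to children of its image. -/
def IsTreeAut (f : Equiv.Perm (Vtx X)) : Prop :=
  f [] = [] ∧ ∀ (w : Vtx X) (x : X), ∃ y : X, f (w ++ [x]) = f w ++ [y]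

/-- The state (section) of `f` at the vertex `w`, as a function on vertices. -/
def stateFun (f : Equiv.Perm (Vtx X)) (w : Vtx X) : Vtx X → Vtx X :=
  fun t => (f (w ++ t)).drop w.length

/-- The rigid stabilizer of the vertex `v` in the full automorphism group:
all permutations moving only (proper or improper) descendants of `v`. -/
def rist (v : Vtx X) : Subgroup (Equiv.Perm (Vtx X)) where
  carrier := {g | ∀ w : Vtx X, ¬ v <+: w → g w = w}
  one_mem' := by intro w _; rfl
  mul_mem' := by
    intro a b ha hb w hw
    have : (a * b) w = a (b w) := rfl
    rw [this, hb w hw, ha w hw]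
  inv_mem' := by
    intro a ha w hw
    have h := ha w hw
    conv_lhs => rw [← h]
    exact Equiv.symm_apply_apply a w

/-- The rigid stabilizer of `v` in `G`. -/
def ristG (G : Subgroup (Equiv.Perm (Vtx X))) (v : Vtx X) :
    Subgroup (Equiv.Perm (Vtx X)) :=
  rist v ⊓ G

/-- The `n`-th level rigid stabilizer of `G`: the subgroup generated by the
rigid stabilizers of all vertices of level `n`. -/
def ristLevel (G : Subgroup (Equiv.Perm (Vtx X))) (n : ℕ) :
    Subgroup (Equiv.Perm (Vtx X)) :=
  ⨆ v ∈ {v : Vtx X | v.length = n}, ristG G v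

/-- The `n`-th level stabilizer of `G`: elements fixing all vertices of level `≤ n`. -/
def stabLevel (G : Subgroup (Equiv.Perm (Vtx X))) (n : ℕ) :
    Subgroup (Equiv.Perm (Vtx X)) :=
  G ⊓ { carrier := {g | ∀ w : Vtx X, w.length ≤ n → g w = w}
        one_mem' := by intro w _; rfl
        mul_mem' := by
          intro a b ha hb w hw
          have : (a * b) w = a (b w) := rfl
          rw [this, hb w hw, ha w hw]
        inv_mem' := by
          intro a ha w hw
          have h := ha w hw
          conv_lhs => rw [← h]
          exact Equiv.symm_apply_apply a w }

/-- Underlying function of the vtr `v*g`. -/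
def vtrFun (v : Vtx X) (g : Vtx X → Vtx X) : Vtx X → Vtx X :=
  fun w => if v <+: w then v ++ g (w.drop v.length) else w

lemma vtr_aux (v : Vtx X) (g h : Vtx X → Vtx X)
    (hgh : ∀ t, h (g t) = t) (w : Vtx X) :
    vtrFun v h (vtrFun v g w) = w := by
  by_cases hp : v <+: w
  · obtain ⟨t, rfl⟩ := hp
    simp [vtrFun, List.drop_left, hgh, List.prefix_append]
  · simp [vtrFun, hp]

/-- The vtr `v*g`: the automorphism acting as `g` on the subtree rooted
at `v` and trivially elsewhere. -/
def vtr (v : Vtx X) (g : Equiv.Perm (Vtx X)) : Equiv.Perm (Vtx X) where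
  toFun := vtrFun v g
  invFun := vtrFun v g.symm
  left_inv := vtr_aux v g g.symm fun t => g.symm_apply_apply t
  right_inv := vtr_aux v g.symm g fun t => g.apply_symm_apply t

lemma vtr_apply (v : Vtx X) (g : Equiv.Perm (Vtx X)) (w : Vtx X) :
    vtr v g w = if v <+: w then v ++ g (w.drop v.length) else w := rfl

/-- `g ↦ v*g` as a group homomorphism. -/
def vtrHom (v : Vtx X) : Equiv.Perm (Vtx X) →* Equiv.Perm (Vtx X) where
  toFun := vtr v
  map_one' := by
    ext w
    by_cases hp : v <+: w
    · obtain ⟨t, rfl⟩ := hp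
      simp [vtr, vtrFun, List.drop_left, List.prefix_append]
    · simp [vtr, vtrFun, hp]
  map_mul' := by
    intro a b
    ext w
    have hmul : (vtr v a * vtr v b) w = vtr v a (vtr v b w) := rfl
    rw [hmul]
    by_cases hp : v <+: w
    · obtain ⟨t, rfl⟩ := hp
      simp [vtr, vtrFun, List.drop_left, List.prefix_append]
    · simp [vtr, vtrFun, hp]

/-- `K` is a branching subgroup of `G`: `K ≤ G` and `v*K ≤ K` for all vertices. -/
def IsBranching (G K : Subgroup (Equiv.Perm (Vtx X))) : Prop :=
  K ≤ G ∧ ∀ v : Vtx X, ∀ g ∈ K, vtr v g ∈ K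

/-- The product `X^n * K` of the translates `v*K` over all vertices of level `n`. -/
def levelProd (K : Subgroup (Equiv.Perm (Vtx X))) (n : ℕ) :
    Subgroup (Equiv.Perm (Vtx X)) :=
  Subgroup.closure {p | ∃ v : Vtx X, v.length = n ∧ ∃ g ∈ K, p = vtr v g}

/-- The group `G⋉v` of states at `v` of the rigid stabilizer:
those `g ∈ G` with `v*g ∈ G`. -/
def pristSub (G : Subgroup (Equiv.Perm (Vtx X))) (v : Vtx X) :
    Subgroup (Equiv.Perm (Vtx X)) :=
  G ⊓ G.comap (vtrHom v)

/-- `G_#`, the intersection of all `G⋉v` (the maximal branching subgroup when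
`G` is regular branch). -/
def Gsharp (G : Subgroup (Equiv.Perm (Vtx X))) : Subgroup (Equiv.Perm (Vtx X)) :=
  ⨅ v : Vtx X, pristSub G v

/-- `G` is self-similar: all states of elements of `G` are (induced by) elements of `G`. -/
def SelfSimilar (G : Subgroup (Equiv.Perm (Vtx X))) : Prop :=
  ∀ g ∈ G, ∀ w : Vtx X, ∃ h ∈ G, ∀ t : Vtx X, h t = stateFun g w t

/-- `G` is level-transitive: transitive on each level of the tree. -/
def LevelTransitive (G : Subgroup (Equiv.Perm (Vtx X))) : Prop :=
  ∀ v w : Vtx X, v.length = w.length → ∃ g ∈ G, g v = w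

/-- `G` is recurrent: the state at `v` of the stabilizer of `v` is all of `G`. -/
def Recurrent (G : Subgroup (Equiv.Perm (Vtx X))) : Prop :=
  ∀ v : Vtx X, ∀ h : Equiv.Perm (Vtx X),
    (h ∈ G ↔ ∃ g ∈ G, g v = v ∧ ∀ t : Vtx X, h t = stateFun g v t)

/-- `G` is a regular branch group (for this action): it has a non-trivial
branching subgroup `K` with all products `X^n*K` of finite index in `G`. -/
def RegularBranch (G : Subgroup (Equiv.Perm (Vtx X))) : Prop :=
  ∃ K : Subgroup (Equiv.Perm (Vtx X)), IsBranching G K ∧ K ≠ ⊥ ∧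
    ∀ n : ℕ, ((levelProd K n).subgroupOf G).FiniteIndex

/-- The subgroup generated by `e`-th powers of elements of `H`. -/
def powSubgroup {P : Type*} [Group P] (H : Subgroup P) (e : ℕ) : Subgroup P :=
  Subgroup.closure {x | ∃ h ∈ H, x = h ^ e}

/-- The normal closure of `g` in the subgroup `Γ`. -/
def nclosure {P : Type*} [Group P] (Γ : Subgroup P) (g : P) : Subgroup P :=
  Subgroup.closure {x | ∃ h ∈ Γ, x = h * g * h⁻¹}

/-- `g` is finite-state: it has only finitely many states. -/
def FiniteState (g : Equiv.Perm (Vtx X)) : Prop :=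
  {f : Vtx X → Vtx X | ∃ w : Vtx X, f = stateFun g w}.Finite

/-- `g` fixes the boundary ray `y`, i.e. it fixes each of its finite prefixes. -/
def fixesRay (g : Equiv.Perm (Vtx X)) (y : ℕ → X) : Prop :=
  ∀ n : ℕ, g ((List.range n).map y) = (List.range n).map y

end Tree

/-- A group satisfies a (non-trivial) group law. -/
def SatisfiesLaw (G : Type*) [Group G] : Prop :=
  ∃ w : FreeGroup ℕ, w ≠ 1 ∧ ∀ φ : FreeGroup ℕ →* G, φ w = 1

section Aux
set_option linter.unusedSectionVars false
set_option linter.unusedVariables false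
variable {X : Type*} [DecidableEq X]

lemma isTreeAut_one : IsTreeAut (1 : Equiv.Perm (Vtx X)) :=
  ⟨rfl, fun w x => ⟨x, rfl⟩⟩

lemma IsTreeAut.length_apply {f : Equiv.Perm (Vtx X)} (hf : IsTreeAut f) :
    ∀ w : Vtx X, (f w).length = w.length := by
  intro w
  induction w using List.reverseRecOn with
  | nil => simp [hf.1]
  | append_singleton w x ih =>
    obtain ⟨y, hy⟩ := hf.2 w x
    simp [hy, ih]

lemma IsTreeAut.prefix_apply {f : Equiv.Perm (Vtx X)} (hf : IsTreeAut f)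
    (w t : Vtx X) : f w <+: f (w ++ t) := by
  induction t using List.reverseRecOn with
  | nil => simp
  | append_singleton t x ih =>
    obtain ⟨y, hy⟩ := hf.2 (w ++ t) x
    rw [← List.append_assoc, hy]
    exact ih.trans (by simp)

lemma IsTreeAut.apply_append {f : Equiv.Perm (Vtx X)} (hf : IsTreeAut f)
    (w t : Vtx X) : f (w ++ t) = f w ++ stateFun f w t := by
  obtain ⟨s, hs⟩ := hf.prefix_apply w t
  have hlen : (f w).length = w.length := hf.length_apply w
  rw [stateFun, ← hs, ← hlen, List.drop_left]

lemma IsTreeAut.prefix_mono {f : Equiv.Perm (Vtx X)} (hf : IsTreeAut f)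
    {v w : Vtx X} (h : v <+: w) : f v <+: f w := by
  obtain ⟨t, rfl⟩ := h
  exact hf.prefix_apply v t

lemma IsTreeAut.mul {f g : Equiv.Perm (Vtx X)} (hf : IsTreeAut f)
    (hg : IsTreeAut g) : IsTreeAut (f * g) := by
  constructor
  · show f (g []) = []
    rw [hg.1, hf.1]
  · intro w x
    obtain ⟨y, hy⟩ := hg.2 w x
    obtain ⟨z, hz⟩ := hf.2 (g w) y
    exact ⟨z, by show f (g (w ++ [x])) = f (g w) ++ [z]; rw [hy, hz]⟩

lemma IsTreeAut.inv {f : Equiv.Perm (Vtx X)} (hf : IsTreeAut f) :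
    IsTreeAut f⁻¹ := by
  constructor
  · have : f⁻¹ (f []) = [] := Equiv.symm_apply_apply f []
    rwa [hf.1] at this
  · intro w x
    have hfu : f (f⁻¹ (w ++ [x])) = w ++ [x] := Equiv.apply_symm_apply f (w ++ [x])
    have hulen : (f⁻¹ (w ++ [x])).length = w.length + 1 := by
      have := hf.length_apply (f⁻¹ (w ++ [x]))
      rw [hfu] at this
      simpa using this.symm
    have hune : f⁻¹ (w ++ [x]) ≠ [] := by
      intro h; rw [h] at hulen; simp at hulen
    obtain ⟨u', z, hu⟩ : ∃ u' z, f⁻¹ (w ++ [x]) = u' ++ [z] :=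
      ⟨_, _, (List.dropLast_append_getLast hune).symm⟩
    rw [hu] at hfu
    obtain ⟨y, hy⟩ := hf.2 u' z
    rw [hy] at hfu
    have hlast : y = x := by
      have := congrArg (List.getLast? ·) hfu
      simpa using this
    have hinit : f u' = w := by
      have h2 := congrArg (List.dropLast ·) hfu
      simpa using h2
    refine ⟨z, ?_⟩
    rw [hu, ← hinit, Equiv.Perm.coe_inv, Equiv.symm_apply_apply]

lemma stateFun_mul {f g : Equiv.Perm (Vtx X)} (hf : IsTreeAut f)
    (hg : IsTreeAut g) (v : Vtx X) :
    stateFun (f * g) v = stateFun f (g v) ∘ stateFun g v := by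
  funext t
  have h1 : (f * g) (v ++ t) = f (g (v ++ t)) := rfl
  have h2 : g (v ++ t) = g v ++ stateFun g v t := hg.apply_append v t
  have h3 : f (g v ++ stateFun g v t) = f (g v) ++ stateFun f (g v) (stateFun g v t) :=
    hf.apply_append (g v) (stateFun g v t)
  have hlen : (f (g v)).length = v.length := by
    rw [hf.length_apply, hg.length_apply]
  show ((f * g) (v ++ t)).drop v.length = _
  rw [h1, h2, h3, ← hlen, List.drop_left]
  rfl

lemma stateFun_one (v : Vtx X) : stateFun (1 : Equiv.Perm (Vtx X)) v = id := by
  funext t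
  show ((v ++ t)).drop v.length = t
  exact List.drop_left

end Aux
section Aux2
set_option linter.unusedSectionVars false
variable {X : Type*} [DecidableEq X]

def statesSet (g : Equiv.Perm (Vtx X)) : Set (Vtx X → Vtx X) :=
  {f | ∃ w : Vtx X, f = stateFun g w}

lemma finiteState_one : FiniteState (1 : Equiv.Perm (Vtx X)) := by
  apply Set.Finite.subset (Set.finite_singleton id)
  rintro f ⟨w, rfl⟩
  simp [stateFun_one]

lemma finiteState_mul {f g : Equiv.Perm (Vtx X)} (hf : IsTreeAut f)
    (hg : IsTreeAut g) (hfs : FiniteState f) (hgs : FiniteState g) :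
    FiniteState (f * g) := by
  apply Set.Finite.subset (Set.Finite.image (fun p : _ × _ => p.1 ∘ p.2) (hfs.prod hgs))
  rintro - ⟨w, rfl⟩
  exact ⟨(stateFun f (g w), stateFun g w), ⟨⟨g w, rfl⟩, ⟨w, rfl⟩⟩, (stateFun_mul hf hg w).symm⟩

lemma stateFun_inv_comp {f : Equiv.Perm (Vtx X)} (hf : IsTreeAut f) (v : Vtx X) :
    stateFun f⁻¹ (f v) ∘ stateFun f v = id ∧
      stateFun f v ∘ stateFun f⁻¹ (f v) = id := by
  constructor
  · have h := stateFun_mul hf.inv hf v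
    rw [inv_mul_cancel, stateFun_one] at h
    exact h.symm
  · have h := stateFun_mul hf hf.inv (f v)
    rw [mul_inv_cancel, stateFun_one, Equiv.Perm.coe_inv, Equiv.symm_apply_apply] at h
    exact h.symm

lemma finiteState_inv {f : Equiv.Perm (Vtx X)} (hf : IsTreeAut f)
    (hfs : FiniteState f) : FiniteState f⁻¹ := by
  apply Set.Finite.subset (Set.Finite.image Function.invFun hfs)
  rintro - ⟨w, rfl⟩
  refine ⟨stateFun f (f⁻¹ w), ⟨f⁻¹ w, rfl⟩, ?_⟩
  obtain ⟨hl, hr⟩ := stateFun_inv_comp hf (f⁻¹ w)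
  rw [show f (f⁻¹ w) = w from Equiv.apply_symm_apply f w] at hl hr
  -- stateFun f⁻¹ w is the two-sided inverse of h := stateFun f (f⁻¹ w)
  set h := stateFun f (f⁻¹ w)
  have hbij : Function.Bijective h :=
    ⟨Function.LeftInverse.injective (g := stateFun f⁻¹ w) (fun t => congrFun hl t),
     fun t => ⟨stateFun f⁻¹ w t, congrFun hr t⟩⟩
  funext t
  have : h (Function.invFun h t) = t := Function.rightInverse_invFun hbij.2 t
  have := congrArg (stateFun f⁻¹ w) this
  rw [← Function.comp_apply (f := stateFun f⁻¹ w) (g := h), hl] at this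
  simpa using this

/-- The subgroup of finite-state tree automorphisms. -/
def TA (X : Type*) [DecidableEq X] : Subgroup (Equiv.Perm (Vtx X)) where
  carrier := {g | IsTreeAut g ∧ FiniteState g}
  one_mem' := ⟨isTreeAut_one, finiteState_one⟩
  mul_mem' := fun ha hb => ⟨ha.1.mul hb.1, finiteState_mul ha.1 hb.1 ha.2 hb.2⟩
  inv_mem' := fun ha => ⟨ha.1.inv, finiteState_inv ha.1 ha.2⟩

end Aux2
section Aux3
set_option linter.unusedSectionVars false
variable {X : Type*} [DecidableEq X]

lemma rist_fix {a : Equiv.Perm (Vtx X)} {v w : Vtx X} (ha : a ∈ rist v)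
    (hw : ¬ v <+: w) : a w = w := ha w hw

lemma rist_prefix_apply {a : Equiv.Perm (Vtx X)} {v w : Vtx X} (ha : a ∈ rist v)
    (hw : v <+: w) : v <+: a w := by
  by_contra hcon
  have h1 : a (a w) = a w := rist_fix ha hcon
  have h2 : a w = w := a.injective h1
  rw [h2] at hcon
  exact hcon hw

lemma incomparable_of_ne {u u' : Vtx X} (hlen : u.length = u'.length)
    (hne : u ≠ u') : ¬ u <+: u' := fun h => hne (h.eq_of_length hlen)

lemma rist_commute {a b : Equiv.Perm (Vtx X)} {u u' : Vtx X}
    (ha : a ∈ rist u) (hb : b ∈ rist u')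
    (h1 : ¬ u <+: u') (h2 : ¬ u' <+: u) : Commute a b := by
  have key : ∀ w : Vtx X, a (b w) = b (a w) := by
    intro w
    by_cases hu : u <+: w
    · have hu' : ¬ u' <+: w := by
        intro hc
        rcases List.prefix_of_prefix_length_le hu hc (le_of_not_ge (fun hle =>
          h2 (List.prefix_of_prefix_length_le hc hu hle))) with hp
        exact h1 hp
      have hbw : b w = w := rist_fix hb hu'
      have haw : u <+: a w := rist_prefix_apply ha hu
      have hu'aw : ¬ u' <+: a w := by
        intro hc
        rcases List.prefix_of_prefix_length_le haw hc (le_of_not_ge (fun hle =>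
          h2 (List.prefix_of_prefix_length_le hc haw hle))) with hp
        exact h1 hp
      rw [hbw, rist_fix hb hu'aw]
    · by_cases hu' : u' <+: w
      · have haw : a w = w := rist_fix ha hu
        have hbw : u' <+: b w := rist_prefix_apply hb hu'
        have hubw : ¬ u <+: b w := by
          intro hc
          rcases List.prefix_of_prefix_length_le hbw hc (le_of_not_ge (fun hle =>
            h1 (List.prefix_of_prefix_length_le hc hbw hle))) with hp
          exact h2 hp
        rw [haw, rist_fix ha hubw]
      · rw [rist_fix hb hu', rist_fix ha hu, rist_fix hb hu']
  show a * b = b * a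
  exact Equiv.ext key

lemma rist_conj {g a : Equiv.Perm (Vtx X)} {v : Vtx X} (hg : IsTreeAut g)
    (ha : a ∈ rist v) : g * a * g⁻¹ ∈ rist (g v) := by
  intro w hw
  have hnv : ¬ v <+: g⁻¹ w := by
    intro hc
    have := hg.prefix_mono hc
    rw [Equiv.Perm.coe_inv, Equiv.apply_symm_apply] at this
    exact hw this
  show g (a (g⁻¹ w)) = w
  rw [rist_fix ha hnv, Equiv.Perm.coe_inv, Equiv.apply_symm_apply]

lemma rist_mono {v v' : Vtx X} (h : v <+: v') : rist v' ≤ rist (v : Vtx X) := by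
  intro a ha w hw
  exact rist_fix ha (fun hc => hw (h.trans hc))

lemma ristG_mono (G : Subgroup (Equiv.Perm (Vtx X))) {v v' : Vtx X}
    (h : v <+: v') : ristG G v' ≤ ristG G v :=
  inf_le_inf_right G (rist_mono h)

end Aux3
section Aux4
set_option linter.unusedSectionVars false
variable {X : Type*} [DecidableEq X]

lemma incomp_family {x0 x1 : X} (hx : x0 ≠ x1) (v : Vtx X) {i j : ℕ} (hij : i ≠ j) :
    ¬ (v ++ (List.replicate i x1 ++ [x0])) <+: (v ++ (List.replicate j x1 ++ [x0])) := by
  intro h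
  rw [List.prefix_append_right_inj] at h
  have hlen := h.length_le
  simp at hlen
  have hij' : i < j := lt_of_le_of_ne hlen hij
  have hgi : i < (List.replicate i x1 ++ [x0]).length := by simp
  have h1 : (List.replicate i x1 ++ [x0])[i] = x0 := by
    rw [List.getElem_append_right (by simp)]
    simp
  have h2 : (List.replicate j x1 ++ [x0])[i]'(by simp; omega) = x1 := by
    rw [List.getElem_append_left (by simpa using hij')]
    simp
  have := h.getElem hgi
  rw [h1, h2] at this
  exact hx this

lemma exists_nontrivial_in_core (Γ : Subgroup (Equiv.Perm (Vtx X)))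
    (M' : Subgroup ↥Γ) (hMfin : M'.FiniteIndex)
    (hwb : ∀ v : Vtx X, ristG Γ v ≠ ⊥)
    {x0 x1 : X} (hx : x0 ≠ x1) (v : Vtx X) :
    ∃ r : Equiv.Perm (Vtx X), r ∈ Subgroup.map Γ.subtype M' ∧ r ∈ ristG Γ v ∧ r ≠ 1 := by
  classical
  -- choose nontrivial elements in incomparable subtrees below v
  set vtx : ℕ → Vtx X := fun i => v ++ (List.replicate i x1 ++ [x0]) with hvtx
  have hsel : ∀ i : ℕ, ∃ g : Equiv.Perm (Vtx X), g ∈ ristG Γ (vtx i) ∧ g ≠ 1 := by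
    intro i
    by_contra hcon
    push_neg at hcon
    exact hwb (vtx i) (Subgroup.eq_bot_iff_forall _ |>.mpr (fun g hg => hcon g hg))
  choose g hg hgne using hsel
  have hgΓ : ∀ i, g i ∈ Γ := fun i => (hg i).2
  have hgrist : ∀ i, g i ∈ rist (vtx i) := fun i => (hg i).1
  -- moved vertices
  have hmov : ∀ i, ∃ w : Vtx X, g i w ≠ w ∧ vtx i <+: w := by
    intro i
    have : ∃ w, g i w ≠ w := by
      by_contra hc
      push_neg at hc
      exact hgne i (Equiv.ext hc)
    obtain ⟨w, hw⟩ := this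
    refine ⟨w, hw, ?_⟩
    by_contra hc
    exact hw (rist_fix (hgrist i) hc)
  choose w hw hwpre using hmov
  -- distinct elements
  have hginj : ∀ i j, i ≠ j → g i ≠ g j := by
    intro i j hij heq
    have h1 : g j (w i) = w i := by
      apply rist_fix (hgrist j)
      intro hc
      rcases Nat.lt_or_ge (vtx j).length (vtx i).length with hl | hl
      · exact incomp_family hx v hij.symm (List.prefix_of_prefix_length_le hc (hwpre i) hl.le)
      · exact incomp_family hx v hij (List.prefix_of_prefix_length_le (hwpre i) hc hl)
    rw [← heq] at h1
    exact hw i h1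
  -- pigeonhole in the finite quotient
  haveI : Finite (↥Γ ⧸ M') := by
    apply Nat.finite_of_card_ne_zero
    rw [← Subgroup.index]
    exact hMfin.index_ne_zero
  obtain ⟨i, j, hij, hquot⟩ := Finite.exists_ne_map_eq_of_infinite
    (fun i : ℕ => ((⟨g i, hgΓ i⟩ : ↥Γ) : ↥Γ ⧸ M'))
  have hmem : (⟨g i, hgΓ i⟩ : ↥Γ)⁻¹ * ⟨g j, hgΓ j⟩ ∈ M' := QuotientGroup.eq.mp hquot
  refine ⟨(g i)⁻¹ * g j, ⟨_, hmem, rfl⟩, ?_, ?_⟩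
  · have hvi : v <+: vtx i := List.prefix_append v _
    have hvj : v <+: vtx j := List.prefix_append v _
    exact mul_mem (inv_mem (ristG_mono Γ hvi (hg i))) (ristG_mono Γ hvj (hg j))
  · intro hc
    exact hginj i j hij (inv_mul_eq_one.mp hc)

end Aux4
open scoped commutatorElement
section Aux5
set_option linter.unusedSectionVars false
variable {X : Type*} [DecidableEq X]
variable {Γ M : Subgroup (Equiv.Perm (Vtx X))}

lemma commutator_mem_of_moved
    (hMle : M ≤ Γ)
    (hMnorm : ∀ γ ∈ Γ, ∀ m ∈ M, γ * m * γ⁻¹ ∈ M)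
    (hΓta : ∀ g ∈ Γ, IsTreeAut g)
    {g : Equiv.Perm (Vtx X)} (hgM : g ∈ M) {u : Vtx X} (hgu : g u ≠ u)
    {a b : Equiv.Perm (Vtx X)} (ha : a ∈ ristG Γ u) (hb : b ∈ ristG Γ u) :
    ⁅a, b⁆ ∈ M := by
  -- first prove it for ⁅a⁻¹, b⁆ shape, for all a
  suffices H : ∀ a' : Equiv.Perm (Vtx X), a' ∈ ristG Γ u → ⁅a'⁻¹, b⁆ ∈ M by
    have := H a⁻¹ (inv_mem ha)
    rwa [inv_inv] at this
  intro a ha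
  have hgΓ : g ∈ Γ := hMle hgM
  have hgta : IsTreeAut g := hΓta g hgΓ
  have haΓ : a ∈ Γ := ha.2
  have hbΓ : b ∈ Γ := hb.2
  have hlen : (g u).length = u.length := hgta.length_apply u
  have h1 : ¬ u <+: g u := incomparable_of_ne hlen.symm (Ne.symm hgu)
  have h2 : ¬ g u <+: u := incomparable_of_ne hlen hgu
  set c := g * a * g⁻¹ with hc
  have hcrist : c ∈ rist (g u) := rist_conj hgta ha.1
  have hca : Commute c a := rist_commute hcrist ha.1 h2 h1
  have hcb : Commute c b := rist_commute hcrist hb.1 h2 h1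
  -- membership of the double commutator
  have hGa : ⁅g, a⁆ ∈ M := by
    have : ⁅g, a⁆ = g * (a * g⁻¹ * a⁻¹) := by group
    rw [this]
    exact mul_mem hgM (hMnorm a haΓ g⁻¹ (inv_mem hgM))
  have hGab : ⁅⁅g, a⁆, b⁆ ∈ M := by
    have : ⁅⁅g, a⁆, b⁆ = ⁅g, a⁆ * (b * ⁅g, a⁆⁻¹ * b⁻¹) := by group
    rw [this]
    exact mul_mem hGa (hMnorm b hbΓ _ (inv_mem hGa))
  -- identity ⁅⁅g,a⁆,b⁆ = ⁅a⁻¹, b⁆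
  have hid : ⁅⁅g, a⁆, b⁆ = ⁅a⁻¹, b⁆ := by
    have e1 : ⁅g, a⁆ = c * a⁻¹ := by rw [hc]; group
    have hx : Commute c (a⁻¹ * b * a) :=
      (hca.inv_right.mul_right (hcb.mul_right hca))
    calc ⁅⁅g, a⁆, b⁆ = c * (a⁻¹ * b * a) * c⁻¹ * b⁻¹ := by
          rw [e1]; group
      _ = (a⁻¹ * b * a) * c * c⁻¹ * b⁻¹ := by rw [hx.eq]
      _ = a⁻¹ * b * a * b⁻¹ := by group
      _ = ⁅a⁻¹, b⁆ := by group
  rw [← hid]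
  exact hGab

lemma moved_extend (hΓta : ∀ g ∈ Γ, IsTreeAut g) (hMle : M ≤ Γ)
    {g : Equiv.Perm (Vtx X)} (hgM : g ∈ M) {w : Vtx X} (hgw : g w ≠ w) (t : Vtx X) :
    g (w ++ t) ≠ w ++ t := by
  have hgta : IsTreeAut g := hΓta g (hMle hgM)
  intro hc
  rw [hgta.apply_append] at hc
  have hlen : (g w).length = w.length := hgta.length_apply w
  have := congrArg (List.take w.length) hc
  rw [← hlen, List.take_left, hlen, List.take_left] at this
  exact hgw this

end Aux5
section Aux6
set_option linter.unusedSectionVars false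
set_option maxHeartbeats 1000000
variable {X : Type*} [DecidableEq X]

lemma stateFun_inv_eq_of_eq {g : Equiv.Perm (Vtx X)} (hg : IsTreeAut g)
    {v w : Vtx X} (hv : g v = v) (hw : g w = w)
    (h : stateFun g v = stateFun g w) : stateFun g⁻¹ v = stateFun g⁻¹ w := by
  obtain ⟨hvl, hvr⟩ := stateFun_inv_comp hg v
  obtain ⟨hwl, hwr⟩ := stateFun_inv_comp hg w
  rw [hv] at hvl hvr
  rw [hw] at hwl hwr
  calc stateFun g⁻¹ v = stateFun g⁻¹ v ∘ (stateFun g w ∘ stateFun g⁻¹ w) := by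
        rw [hwr]; rfl
    _ = (stateFun g⁻¹ v ∘ stateFun g v) ∘ stateFun g⁻¹ w := by
        rw [h]; rfl
    _ = stateFun g⁻¹ w := by rw [hvl]; rfl

lemma no_fixed_chain
    (Γ : Subgroup (Equiv.Perm (Vtx X))) (hFG : Group.FG ↥Γ)
    (hΓta : ∀ g ∈ Γ, IsTreeAut g) (hΓfs : ∀ g ∈ Γ, FiniteState g)
    (M' : Subgroup ↥Γ) (hMfin : M'.FiniteIndex)
    (hwb : ∀ v : Vtx X, ristG Γ v ≠ ⊥)
    {x0 x1 : X} (hx : x0 ≠ x1)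
    (pref : ℕ → Vtx X) (hplen : ∀ k, (pref k).length = k)
    (hpfix : ∀ k : ℕ, ∀ m ∈ Subgroup.map Γ.subtype M', m (pref k) = pref k) :
    False := by
  classical
  -- the ray stabilizer
  set Hperm : Subgroup (Equiv.Perm (Vtx X)) :=
    { carrier := {g | ∀ k : ℕ, g (pref k) = pref k}
      one_mem' := fun k => rfl
      mul_mem' := by
        intro a b ha hb k
        show a (b (pref k)) = pref k
        rw [hb k, ha k]
      inv_mem' := by
        intro a ha k
        conv_lhs => rw [← ha k]
        exact Equiv.symm_apply_apply a (pref k) } with hHperm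
  set H' : Subgroup ↥Γ := Hperm.subgroupOf Γ with hH'
  have hMH : M' ≤ H' := by
    intro m hm
    intro k
    exact hpfix k _ ⟨m, hm, rfl⟩
  haveI : H'.FiniteIndex := by
    constructor
    intro h0
    exact hMfin.index_ne_zero (Nat.eq_zero_of_zero_dvd (h0 ▸ Subgroup.index_dvd_of_le hMH))
  haveI : Group.FG ↥Γ := hFG
  haveI : Group.FG ↥H' := H'.fg_of_index_ne_zero
  obtain ⟨T, hTtop, hTfin⟩ := Group.fg_iff.mp ‹Group.FG ↥H'›
  -- the embedding of H' into the permutation group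
  set φ : ↥H' →* Equiv.Perm (Vtx X) := Γ.subtype.comp H'.subtype with hφ
  have hφΓ : ∀ h : ↥H', (φ h) ∈ Γ := fun h => (h : ↥Γ).2
  have hφfix : ∀ (h : ↥H') (k : ℕ), (φ h) (pref k) = pref k := fun h k => h.2 k
  -- pigeonhole on the tuples of states of generators along the chain
  have hTfin' : Finite ↥T := hTfin
  set Tpi : Set (↥T → (Vtx X → Vtx X)) :=
    Set.pi Set.univ (fun t : ↥T => statesSet (φ (t : ↥H'))) with hTpi
  have hTpifin : Tpi.Finite := Set.Finite.pi (fun t => hΓfs _ (hφΓ _))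
  haveI : Finite ↥Tpi := hTpifin
  set Φ : ℕ → ↥Tpi := fun k =>
    ⟨fun t => stateFun (φ (t : ↥H')) (pref k), fun t _ => ⟨pref k, rfl⟩⟩ with hΦ
  obtain ⟨n', m', hnm, hΦeq⟩ := Finite.exists_ne_map_eq_of_infinite Φ
  -- wlog n < m
  obtain ⟨n, m, hlt, hstateq⟩ :
      ∃ n m : ℕ, n < m ∧ ∀ t : ↥T, stateFun (φ (t : ↥H')) (pref n) =
        stateFun (φ (t : ↥H')) (pref m) := by
    rcases lt_or_gt_of_ne hnm with h | h
    · exact ⟨n', m', h, fun t => congrFun (congrArg Subtype.val hΦeq) t⟩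
    · exact ⟨m', n', h, fun t => (congrFun (congrArg Subtype.val hΦeq) t).symm⟩
  -- the subgroup of elements with equal states at pref n and pref m
  set E : Subgroup (Equiv.Perm (Vtx X)) :=
    { carrier := {g | IsTreeAut g ∧ (∀ k : ℕ, g (pref k) = pref k) ∧
        stateFun g (pref n) = stateFun g (pref m)}
      one_mem' := ⟨isTreeAut_one, fun k => rfl, by rw [stateFun_one, stateFun_one]⟩
      mul_mem' := by
        rintro a b ⟨hat, haf, has⟩ ⟨hbt, hbf, hbs⟩
        refine ⟨hat.mul hbt, fun k => ?_, ?_⟩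
        · show a (b (pref k)) = pref k
          rw [hbf k, haf k]
        · rw [stateFun_mul hat hbt, stateFun_mul hat hbt, hbf n, hbf m, has, hbs]
      inv_mem' := by
        rintro a ⟨hat, haf, has⟩
        refine ⟨hat.inv, fun k => ?_, ?_⟩
        · conv_lhs => rw [← haf k]
          exact Equiv.symm_apply_apply a (pref k)
        · exact stateFun_inv_eq_of_eq hat (haf n) (haf m) has } with hE
  -- every element of H' lands in E
  have hTE : ∀ h : ↥H', φ h ∈ E := by
    have hsub : T ⊆ (E.comap φ : Set ↥H') := by
      intro t ht
      refine ⟨hΓta _ (hφΓ _), fun k => hφfix _ k, hstateq ⟨t, ht⟩⟩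
    have : Subgroup.closure T ≤ E.comap φ := Subgroup.closure_le _ |>.mpr hsub
    rw [hTtop] at this
    intro h
    exact this (Subgroup.mem_top h)
  -- produce a nontrivial element of the core inside the rigid stabilizer of pref m
  obtain ⟨r, hrM, hrrist, hrne⟩ := exists_nontrivial_in_core Γ M' hMfin hwb hx (pref m)
  obtain ⟨ρ, hρM, hρr⟩ := hrM
  have hrΓ : r ∈ Γ := by rw [← hρr]; exact ρ.2
  have hrH' : (⟨r, hrΓ⟩ : ↥Γ) ∈ H' := by
    apply hMH
    have : ρ = (⟨r, hrΓ⟩ : ↥Γ) := Subtype.ext hρr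
    rwa [this] at hρM
  have hrE : r ∈ E := hTE ⟨⟨r, hrΓ⟩, hrH'⟩
  obtain ⟨hrta, hrfix, hrst⟩ := hrE
  -- derive that r is trivial: strong induction on the length of a moved vertex
  have hfixall : ∀ L : ℕ, ∀ w : Vtx X, w.length = L → r w = w := by
    intro L
    induction L using Nat.strong_induction_on with
    | _ L IH =>
      intro w hwlen
      by_contra hmoved
      have hpm : pref m <+: w := by
        by_contra hc
        exact hmoved (rist_fix hrrist.1 hc)
      obtain ⟨t, rfl⟩ := hpm
      have happ : r (pref m ++ t) = pref m ++ stateFun r (pref m) t := by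
        rw [hrta.apply_append, hrfix m]
      have hst : stateFun r (pref m) t ≠ t := by
        intro hc
        rw [hc] at happ
        exact hmoved happ
      have happ2 : r (pref n ++ t) = pref n ++ stateFun r (pref n) t := by
        rw [hrta.apply_append, hrfix n]
      have hlt2 : (pref n ++ t).length < L := by
        rw [← hwlen]
        simp only [List.length_append, hplen n, hplen m]
        omega
      have := IH _ hlt2 (pref n ++ t) rfl
      rw [happ2] at this
      have := List.append_cancel_left this
      rw [hrst] at this
      exact hst this
  exact hrne (Equiv.ext fun w => hfixall w.length w rfl)

end Aux6
/-- in a weakly branch group generated by finitely many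
finite-state automorphisms, every finite-index subgroup contains the derived
subgroup of some level rigid stabilizer. -/
theorem finite_index_contains_rist_commutator
    {X : Type*} [DecidableEq X] [Fintype X]
    (Γ : Subgroup (Equiv.Perm (Vtx X)))
    (S : Set (Equiv.Perm (Vtx X))) (hSfin : S.Finite)
    (hSst : ∀ s ∈ S, IsTreeAut s ∧ FiniteState s)
    (hgen : Γ = Subgroup.closure S)
    (hwb : ∀ v : Vtx X, ristG Γ v ≠ ⊥)
    (N : Subgroup (Equiv.Perm (Vtx X))) (hNG : N ≤ Γ)
    (hNfin : (N.subgroupOf Γ).FiniteIndex) :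
    ∃ n : ℕ, ⁅ristLevel Γ n, ristLevel Γ n⁆ ≤ N := by
  classical
  -- all elements of Γ are finite-state tree automorphisms
  have hΓsub : Γ ≤ TA X := by
    rw [hgen]
    exact Subgroup.closure_le _ |>.mpr (fun s hs => hSst s hs)
  have hΓta : ∀ g ∈ Γ, IsTreeAut g := fun g hg => (hΓsub hg).1
  have hΓfs : ∀ g ∈ Γ, FiniteState g := fun g hg => (hΓsub hg).2
  -- the alphabet has at least two letters
  obtain ⟨x0, x1, hx⟩ : ∃ x0 x1 : X, x0 ≠ x1 := by
    by_contra hc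
    push_neg at hc
    have htriv : ∀ g ∈ Γ, g = (1 : Equiv.Perm (Vtx X)) := by
      intro g hg
      have hta := hΓta g hg
      have : ∀ w : Vtx X, g w = w := by
        intro w
        induction w using List.reverseRecOn with
        | nil => exact hta.1
        | append_singleton w x ih =>
          obtain ⟨y, hy⟩ := hta.2 w x
          rw [hy, ih, hc y x]
      exact Equiv.ext this
    apply hwb ([] : Vtx X)
    apply Subgroup.eq_bot_iff_forall _ |>.mpr
    intro g hg
    exact htriv g hg.2
  -- the normal core of N in Γ
  haveI := hNfin
  set M' : Subgroup ↥Γ := (N.subgroupOf Γ).normalCore with hM'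
  haveI hM'fin : M'.FiniteIndex := Subgroup.finiteIndex_normalCore _
  set M : Subgroup (Equiv.Perm (Vtx X)) := Subgroup.map Γ.subtype M' with hM
  have hMle : M ≤ Γ := by
    rintro g ⟨ρ, hρ, rfl⟩
    exact ρ.2
  have hMN : M ≤ N := by
    rintro g ⟨ρ, hρ, rfl⟩
    have h2 := Subgroup.normalCore_le (N.subgroupOf Γ) hρ
    exact Subgroup.mem_subgroupOf.mp h2
  have hMnorm : ∀ γ ∈ Γ, ∀ g ∈ M, γ * g * γ⁻¹ ∈ M := by
    rintro γ hγ g ⟨ρ, hρ, rfl⟩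
    haveI : M'.Normal := Subgroup.normalCore_normal _
    refine ⟨(⟨γ, hγ⟩ : ↥Γ) * ρ * (⟨γ, hγ⟩ : ↥Γ)⁻¹, this.conj_mem ρ hρ ⟨γ, hγ⟩, rfl⟩
  -- finite generation of Γ
  have hFG : Group.FG ↥Γ := by
    rw [hgen]
    apply Group.fg_iff.mpr
    refine ⟨(Subgroup.closure S).subtype ⁻¹' S, Subgroup.closure_preimage_eq_top S, ?_⟩
    exact hSfin.preimage (Subtype.coe_injective.injOn)
  -- some level consists entirely of vertices moved by the core
  have hlev : ∃ n : ℕ, ∀ v : Vtx X, v.length = n → ∃ g ∈ M, g v ≠ v := by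
    by_contra hc
    push_neg at hc
    have hsel : ∀ n : ℕ, ∃ v : Vtx X, v.length = n ∧ ∀ g ∈ M, g v = v := by
      intro n
      obtain ⟨v, hvlen, hvfix⟩ := hc n
      refine ⟨v, hvlen, fun g hg => ?_⟩
      by_contra hne
      exact hne (hvfix g hg)
    choose pref hplen hpfix using hsel
    exact no_fixed_chain Γ hFG hΓta hΓfs M' hM'fin hwb hx pref hplen
      (fun k m hm => hpfix k m hm)
  obtain ⟨n, hn⟩ := hlev
  refine ⟨n, ?_⟩
  -- the commutator of each level-n rigid stabilizer lies in M
  have key : ∀ v : Vtx X, v.length = n → ∀ a ∈ ristG Γ v, ∀ b ∈ ristG Γ v, ⁅a, b⁆ ∈ M := by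
    intro v hv a ha b hb
    obtain ⟨g, hgM, hgv⟩ := hn v hv
    exact commutator_mem_of_moved hMle hMnorm hΓta hgM hgv ha hb
  -- rewrite the level rigid stabilizer as a supremum over a subtype
  have hrw : ristLevel Γ n = ⨆ x : {v : Vtx X // v.length = n}, ristG Γ x.1 := by
    rw [ristLevel]
    exact iSup_subtype'
  -- commutators of single rigid stabilizer elements with arbitrary elements
  have step1 : ∀ x : {v : Vtx X // v.length = n}, ∀ a ∈ ristG Γ x.1,
      ∀ y ∈ ristLevel Γ n, ⁅a, y⁆ ∈ M := by
    intro x a ha y hy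
    rw [hrw] at hy
    have haΓ : a ∈ Γ := ha.2
    refine (Subgroup.iSup_induction _ (C := fun y => y ∈ Γ ∧ ⁅a, y⁆ ∈ M) hy ?_ ?_ ?_).2
    · rintro ⟨v', hv'⟩ z hz
      refine ⟨hz.2, ?_⟩
      by_cases hvv : x.1 = v'
      · exact key x.1 x.2 a ha z (hvv ▸ hz)
      · have hcomm : Commute a z :=
          rist_commute ha.1 hz.1 (incomparable_of_ne (x.2.trans hv'.symm) hvv)
            (incomparable_of_ne (hv'.trans x.2.symm) (Ne.symm hvv))
        rw [commutatorElement_eq_one_iff_commute.mpr hcomm]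
        exact one_mem M
    · exact ⟨one_mem Γ, by rw [commutatorElement_one_right]; exact one_mem M⟩
    · rintro y z ⟨hyΓ, hyM⟩ ⟨hzΓ, hzM⟩
      refine ⟨mul_mem hyΓ hzΓ, ?_⟩
      have hid : ⁅a, y * z⁆ = ⁅a, y⁆ * (y * ⁅a, z⁆ * y⁻¹) := by group
      rw [hid]
      exact mul_mem hyM (hMnorm y hyΓ _ hzM)
  -- commutators of arbitrary pairs
  have step2 : ∀ x ∈ ristLevel Γ n, ∀ y ∈ ristLevel Γ n, ⁅x, y⁆ ∈ M := by
    intro x hx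
    rw [hrw] at hx
    refine (Subgroup.iSup_induction _
      (C := fun x => x ∈ Γ ∧ ∀ y ∈ ristLevel Γ n, ⁅x, y⁆ ∈ M) hx ?_ ?_ ?_).2
    · rintro x' a ha
      exact ⟨ha.2, fun y hy => step1 x' a ha y hy⟩
    · exact ⟨one_mem Γ, fun y hy => by
        rw [commutatorElement_one_left]; exact one_mem M⟩
    · rintro a b ⟨haΓ, haM⟩ ⟨hbΓ, hbM⟩
      refine ⟨mul_mem haΓ hbΓ, fun y hy => ?_⟩
      have hid : ⁅a * b, y⁆ = a * ⁅b, y⁆ * a⁻¹ * ⁅a, y⁆ := by group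
      rw [hid]
      exact mul_mem (hMnorm a haΓ _ (hbM y hy)) (haM y hy)
  exact Subgroup.commutator_le.mpr (fun g1 h1 g2 h2 => hMN (step2 g1 h1 g2 h2))
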